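/- For δ₁, δ₂ ∈ [0,1) with δ₂ ≥ δ₁ and ε₂ = 1 (no side-information at the weaker receiver), the region {(R₁,R₂) ≥ 0 : ((1-δ₂)/(1-δ₁))R₁ + R₂ ≤ 1-δ₂, R₁ + ε₁R₂ ≤ 1-δ₁} equals the region {(R₁,R₂) ≥ 0 : R₁/(1-δ₁) + R₂/(1-δ₂) ≤ 1} for every ε₁ ∈ [0,1], i.e., additional side-information at the stronger receiver does not enlarge the region when ε₂ = 1. -/
import Mathlib


theorem region_eq_no_side_info (δ₁ δ₂ : ℝ)
    (hδ₁ : 0 ≤ δ₁) (hδ : δ₁ ≤ δ₂) (hδ₂ : δ₂ < 1) :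
    ∀ ε₁ ∈ Set.Icc (0:ℝ) 1,
      {p : ℝ × ℝ | 0 ≤ p.1 ∧ 0 ≤ p.2 ∧
        ((1 - δ₂) / (1 - δ₁)) * p.1 + p.2 ≤ 1 - δ₂ ∧
        p.1 + ε₁ * p.2 ≤ 1 - δ₁} =
      {p : ℝ × ℝ | 0 ≤ p.1 ∧ 0 ≤ p.2 ∧
        p.1 / (1 - δ₁) + p.2 / (1 - δ₂) ≤ 1} := by
  intro ε₁ hε
  obtain ⟨hε0, hε1⟩ := hε
  have h1 : (0:ℝ) < 1 - δ₁ := by linarith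
  have h2 : (0:ℝ) < 1 - δ₂ := by linarith
  ext ⟨x, y⟩
  simp only [Set.mem_setOf_eq]
  constructor
  · rintro ⟨hx, hy, hA, -⟩
    refine ⟨hx, hy, ?_⟩
    rw [div_add_div _ _ (ne_of_gt h1) (ne_of_gt h2), div_le_one (by positivity)]
    have hA' : (1 - δ₂) * x ≤ (1 - δ₂ - y) * (1 - δ₁) := by
      rw [← div_le_iff₀ h1]; rw [div_mul_eq_mul_div] at hA; linarith
    nlinarith
  · rintro ⟨hx, hy, hC⟩
    rw [div_add_div _ _ (ne_of_gt h1) (ne_of_gt h2), div_le_one (by positivity)] at hC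
    refine ⟨hx, hy, ?_, ?_⟩
    · have : (1 - δ₂) * x / (1 - δ₁) ≤ 1 - δ₂ - y := by
        rw [div_le_iff₀ h1]; nlinarith
      rw [div_mul_eq_mul_div]; linarith
    · nlinarith [mul_nonneg (sub_nonneg.2 hε1) (mul_nonneg hy h2.le),
        mul_nonneg hy (sub_nonneg.2 hδ)]
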